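/- Let π₂ be a policy minimizing Ψ_α^2 over all policies, let λ ≥ 2 be real, and suppose there exists a policy q and a constant 𝓘 ≥ 0 with Ψ_α^λ(q) ≤ 𝓘. Then reg(π₂) − α ≤ 2^{1−2/λ} · (𝓘 · info(π₂))^{1/λ}. -/

import Mathlib

/-- A policy assigns to each context `s` a probability vector over the actions `A`. -/
structure Policy (S A : Type) [Fintype S] [Fintype A] where
  prob : S → A → ℝ
  nonneg : ∀ s a, 0 ≤ prob s a
  sum_eq_one : ∀ s, ∑ a, prob s a = 1

/-- Expected one-step regret of a policy under context distribution `p`. -/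
noncomputable def reg {S A : Type} [Fintype S] [Fintype A]
    (p : S → ℝ) (Δ : S → A → ℝ) (π : Policy S A) : ℝ :=
  ∑ s, p s * ∑ a, Δ s a * π.prob s a

/-- Expected information gain of a policy under context distribution `p`. -/
noncomputable def info {S A : Type} [Fintype S] [Fintype A]
    (p : S → ℝ) (I : S → A → ℝ) (π : Policy S A) : ℝ :=
  ∑ s, p s * ∑ a, I s a * π.prob s a

/-- The `(α, λ)`-marginal information ratio `Ψ_α^λ(π)`. -/
noncomputable def ratio {S A : Type} [Fintype S] [Fintype A]
    (p : S → ℝ) (Δ I : S → A → ℝ) (α lam : ℝ) (π : Policy S A) : ℝ :=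
  (max 0 (reg p Δ π - α)) ^ lam / info p I π

lemma aux_scalar {w lam : ℝ} (hw : 0 < w) (hlam : 2 ≤ lam) :
    w - 1 ≤ w ^ lam / 4 := by
  rcases le_or_gt w 1 with h | h
  · have : (0:ℝ) ≤ w ^ lam := Real.rpow_nonneg hw.le lam
    linarith
  · have h2 : w ^ (2:ℝ) ≤ w ^ lam := Real.rpow_le_rpow_of_exponent_le h.le hlam
    have h3 : w ^ (2:ℝ) = w ^ 2 := by
      rw [show (2:ℝ) = ((2:ℕ):ℝ) by norm_num, Real.rpow_natCast]
    rw [h3] at h2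
    nlinarith [sq_nonneg (w - 2), h2]

lemma aux_c {c lam : ℝ} (hc : 0 < c) (hlam : 2 ≤ lam) :
    2 * c - 1 ≤ 2 ^ (lam - 2) * c ^ lam := by
  have h1 : (2:ℝ) ^ (lam - 2) * c ^ lam = (2 * c) ^ lam / 4 := by
    rw [Real.mul_rpow (by norm_num) hc.le, Real.rpow_sub (by norm_num)]
    rw [show (2:ℝ) ^ (2:ℝ) = 4 by
      rw [show (2:ℝ) = ((2:ℕ):ℝ) by norm_num, Real.rpow_natCast]; norm_num]
    ring
  rw [h1]
  have := aux_scalar (w := 2 * c) (by linarith) hlam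
  linarith

lemma aux1 {x y lam : ℝ} (hx : 0 < x) (hy : 0 < y) (hlam : 2 ≤ lam) :
    x ^ lam * (2 * x * y - x ^ 2) ≤ 2 ^ (lam - 2) * y ^ lam * x ^ 2 := by
  set c := y / x with hc_def
  have hc : 0 < c := div_pos hy hx
  have hy' : y = c * x := by rw [hc_def, div_mul_cancel₀ y hx.ne']
  have hylam : y ^ lam = c ^ lam * x ^ lam := by
    rw [hy', Real.mul_rpow hc.le hx.le]
  have h := aux_c hc hlam
  have hpos : (0:ℝ) ≤ x ^ lam * x ^ 2 :=
    le_of_lt (mul_pos (Real.rpow_pos_of_pos hx lam) (pow_pos hx 2))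
  have h2 := mul_le_mul_of_nonneg_right h hpos
  rw [hylam, hy']
  linear_combination h2

/-- Mixture of two policies. -/
noncomputable def Policy.mix {S A : Type} [Fintype S] [Fintype A]
    (t : ℝ) (ht0 : 0 ≤ t) (ht1 : t ≤ 1) (π q : Policy S A) : Policy S A where
  prob s a := (1 - t) * π.prob s a + t * q.prob s a
  nonneg s a := add_nonneg (mul_nonneg (by linarith) (π.nonneg s a))
    (mul_nonneg ht0 (q.nonneg s a))
  sum_eq_one s := by
    rw [Finset.sum_add_distrib, ← Finset.mul_sum, ← Finset.mul_sum,
      π.sum_eq_one, q.sum_eq_one]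
    ring

lemma exp_mix {S A : Type} [Fintype S] [Fintype A]
    (p : S → ℝ) (f : S → A → ℝ) (t : ℝ) (ht0 : 0 ≤ t) (ht1 : t ≤ 1)
    (π q : Policy S A) :
    (∑ s, p s * ∑ a, f s a * (Policy.mix t ht0 ht1 π q).prob s a) =
      (1 - t) * (∑ s, p s * ∑ a, f s a * π.prob s a)
        + t * (∑ s, p s * ∑ a, f s a * q.prob s a) := by
  rw [Finset.mul_sum, Finset.mul_sum, ← Finset.sum_add_distrib]
  refine Finset.sum_congr rfl fun s _ => ?_
  simp only [Policy.mix]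
  rw [show (∑ a, f s a * ((1 - t) * π.prob s a + t * q.prob s a)) =
      (1 - t) * (∑ a, f s a * π.prob s a) + t * (∑ a, f s a * q.prob s a) by
    rw [Finset.mul_sum, Finset.mul_sum, ← Finset.sum_add_distrib]
    exact Finset.sum_congr rfl fun a _ => by ring]
  ring

lemma info_pos {S A : Type} [Fintype S] [Fintype A] [Nonempty A]
    (p : S → ℝ) (hp0 : ∀ s, 0 ≤ p s) (hpex : ∃ s, 0 < p s)
    (I : S → A → ℝ) (hI : ∀ s a, 0 < I s a) (π : Policy S A) :
    0 < info p I π := by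
  obtain ⟨s₀, hs₀⟩ := hpex
  have inner_pos : ∀ s, 0 < ∑ a, I s a * π.prob s a := by
    intro s
    have hex : ∃ a ∈ Finset.univ (α := A), 0 < π.prob s a := by
      by_contra h
      push_neg at h
      have : (∑ a, π.prob s a) = 0 := Finset.sum_eq_zero fun a _ =>
        le_antisymm (h a (Finset.mem_univ a)) (π.nonneg s a)
      rw [π.sum_eq_one s] at this
      norm_num at this
    obtain ⟨a₀, _, ha₀⟩ := hex
    exact Finset.sum_pos' (fun a _ => mul_nonneg (hI s a).le (π.nonneg s a))
      ⟨a₀, Finset.mem_univ a₀, mul_pos (hI s a₀) ha₀⟩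
  exact Finset.sum_pos' (fun s _ => mul_nonneg (hp0 s) (inner_pos s).le)
    ⟨s₀, Finset.mem_univ s₀, mul_pos hs₀ (inner_pos s₀)⟩

set_option maxHeartbeats 1000000 in
/-- Per-round regret–information tradeoff (Eq. (7) in the proof of Theorem 3.1): if `π₂`
minimizes `Ψ_α^2` and some policy `q` satisfies `Ψ_α^λ(q) ≤ 𝓘` with `𝓘 ≥ 0` and `λ ≥ 2`,
then `reg(π₂) − α ≤ 2^(1−2/λ) · (𝓘 · info(π₂))^(1/λ)`. -/
theorem stmt_3 {S A : Type} [Fintype S] [Fintype A] [Nonempty S] [Nonempty A]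
    (p : S → ℝ) (hp0 : ∀ s, 0 ≤ p s) (hp1 : ∑ s, p s = 1) (hpex : ∃ s, 0 < p s)
    (Δ I : S → A → ℝ) (hΔ : ∀ s a, 0 ≤ Δ s a) (hI : ∀ s a, 0 < I s a)
    (α lam Ibd : ℝ) (hα : 0 ≤ α) (hlam : 2 ≤ lam) (hIbd : 0 ≤ Ibd)
    (π₂ : Policy S A)
    (hmin : ∀ q : Policy S A, ratio p Δ I α 2 π₂ ≤ ratio p Δ I α 2 q)
    (q : Policy S A) (hq : ratio p Δ I α lam q ≤ Ibd) :
    reg p Δ π₂ - α ≤ 2 ^ (1 - 2 / lam) * (Ibd * info p I π₂) ^ (1 / lam) := by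
  have hlam0 : (0:ℝ) < lam := by linarith
  set u := info p I π₂ with hu_def
  set v := info p I q with hv_def
  have hu : 0 < u := info_pos p hp0 hpex I hI π₂
  have hv : 0 < v := info_pos p hp0 hpex I hI q
  set x := max 0 (reg p Δ π₂ - α) with hx_def
  set y := max 0 (reg p Δ q - α) with hy_def
  have hx : 0 ≤ x := le_max_left _ _
  have hy : 0 ≤ y := le_max_left _ _
  have hq' : y ^ lam ≤ Ibd * v := by
    rw [ratio] at hq
    exact (div_le_iff₀ hv).mp hq
  have hr2 : ∀ z : ℝ, 0 ≤ z → z ^ (2:ℝ) = z ^ 2 := fun z _ => by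
    rw [show (2:ℝ) = ((2:ℕ):ℝ) by norm_num, Real.rpow_natCast]
  -- Step A: for each t ∈ (0,1]
  have stepA : ∀ t : ℝ, 0 < t → t ≤ 1 →
      x ^ 2 * v ≤ u * ((1 - t) * (2 * x * y - x ^ 2) + t * y ^ 2) := by
    intro t ht0 ht1
    set π' := Policy.mix t ht0.le ht1 π₂ q with hπ'
    have hreg : reg p Δ π' = (1 - t) * reg p Δ π₂ + t * reg p Δ q :=
      exp_mix p Δ t ht0.le ht1 π₂ q
    have hinfo : info p I π' = (1 - t) * u + t * v :=
      exp_mix p I t ht0.le ht1 π₂ q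
    have hw : 0 < (1 - t) * u + t * v := by nlinarith
    have hm := hmin π'
    rw [ratio, ratio, hinfo] at hm
    set m := max 0 (reg p Δ π' - α) with hm_def
    have hm0 : 0 ≤ m := le_max_left _ _
    have hmle : m ≤ (1 - t) * x + t * y := by
      apply max_le
      · have := le_max_left (0:ℝ) (reg p Δ π₂ - α)
        have := le_max_left (0:ℝ) (reg p Δ q - α)
        nlinarith
      · have h1 : reg p Δ π' - α ≤ (1 - t) * x + t * y := by
          rw [hreg]
          have h2 : reg p Δ π₂ - α ≤ x := le_max_right _ _
          have h3 : reg p Δ q - α ≤ y := le_max_right _ _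
          nlinarith
        exact h1
    rw [hr2 x hx, hr2 m hm0] at hm
    have hkey : x ^ 2 * ((1 - t) * u + t * v) ≤ m ^ 2 * u :=
      (div_le_div_iff₀ hu hw).mp hm
    have hmsq : m ^ 2 ≤ ((1 - t) * x + t * y) ^ 2 := by nlinarith
    have h4 : x ^ 2 * ((1 - t) * u + t * v) ≤ ((1 - t) * x + t * y) ^ 2 * u := by
      nlinarith
    rw [← mul_le_mul_iff_right₀ ht0]
    linear_combination h4
  have hregx : reg p Δ π₂ - α ≤ x := le_max_right _ _
  clear_value x y u v
  -- Step B: limit t → 0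
  have stepB : x ^ 2 * v ≤ u * (2 * x * y - x ^ 2) := by
    have hK : 0 ≤ u * (y - x) ^ 2 := mul_nonneg hu.le (sq_nonneg _)
    set K := u * (y - x) ^ 2 with hK_def
    refine le_of_forall_pos_le_add fun ε hε => ?_
    set t := min 1 (ε / (K + 1)) with ht_def
    have ht0 : 0 < t := lt_min one_pos (div_pos hε (by linarith))
    have ht1 : t ≤ 1 := min_le_left _ _
    have htK : t * K ≤ ε := by
      have h1 : t ≤ ε / (K + 1) := min_le_right _ _
      have h2 : ε / (K + 1) * K ≤ ε := by
        rw [div_mul_eq_mul_div, div_le_iff₀ (by linarith)]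
        nlinarith
      calc t * K ≤ ε / (K + 1) * K := mul_le_mul_of_nonneg_right h1 hK
        _ ≤ ε := h2
    have := stepA t ht0 ht1
    have heq : u * ((1 - t) * (2 * x * y - x ^ 2) + t * y ^ 2) =
        u * (2 * x * y - x ^ 2) + t * K := by rw [hK_def]; ring
    linarith [heq ▸ this]
  -- Step C: x ^ lam ≤ 2 ^ (lam - 2) * (Ibd * u)
  have stepC : x ^ lam ≤ 2 ^ (lam - 2) * (Ibd * u) := by
    rcases eq_or_lt_of_le hx with hx0 | hx0
    · rw [← hx0, Real.zero_rpow hlam0.ne']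
      positivity
    · rcases eq_or_lt_of_le hy with hy0 | hy0
      · exfalso
        rw [← hy0] at stepB
        nlinarith [mul_pos (mul_pos hx0 hx0) hv, mul_pos hu (mul_pos hx0 hx0)]
      · have hcomb : x ^ 2 * y ^ lam ≤ Ibd * (u * (2 * x * y - x ^ 2)) := by
          calc x ^ 2 * y ^ lam ≤ x ^ 2 * (Ibd * v) :=
                mul_le_mul_of_nonneg_left hq' (sq_nonneg x)
            _ = Ibd * (x ^ 2 * v) := by ring
            _ ≤ Ibd * (u * (2 * x * y - x ^ 2)) :=
                mul_le_mul_of_nonneg_left stepB hIbd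
        have ha1 := aux1 hx0 hy0 hlam
        have hxl : 0 < x ^ lam := Real.rpow_pos_of_pos hx0 lam
        have hyl : 0 < y ^ lam := Real.rpow_pos_of_pos hy0 lam
        have h1 : x ^ lam * (x ^ 2 * y ^ lam) ≤
            x ^ lam * (Ibd * (u * (2 * x * y - x ^ 2))) :=
          mul_le_mul_of_nonneg_left hcomb hxl.le
        have h2 : Ibd * u * (x ^ lam * (2 * x * y - x ^ 2)) ≤
            Ibd * u * (2 ^ (lam - 2) * y ^ lam * x ^ 2) :=
          mul_le_mul_of_nonneg_left ha1 (mul_nonneg hIbd hu.le)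
        have h3 : x ^ lam * (x ^ 2 * y ^ lam) ≤
            2 ^ (lam - 2) * (Ibd * u) * (x ^ 2 * y ^ lam) := by nlinarith
        have hpos : 0 < x ^ 2 * y ^ lam := mul_pos (pow_pos hx0 2) hyl
        exact le_of_mul_le_mul_right h3 hpos
  -- Step D: conclude
  have hD : x ≤ 2 ^ (1 - 2 / lam) * (Ibd * u) ^ (1 / lam) := by
    have hMnn : (0:ℝ) ≤ 2 ^ (lam - 2) * (Ibd * u) := by positivity
    have h1 : (x ^ lam) ^ (1 / lam) ≤ (2 ^ (lam - 2) * (Ibd * u)) ^ (1 / lam) :=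
      Real.rpow_le_rpow (Real.rpow_nonneg hx lam) stepC (by positivity)
    have h2 : (x ^ lam) ^ (1 / lam) = x := by
      rw [← Real.rpow_mul hx, mul_one_div, div_self hlam0.ne', Real.rpow_one]
    have h3 : ((2:ℝ) ^ (lam - 2) * (Ibd * u)) ^ (1 / lam) =
        2 ^ (1 - 2 / lam) * (Ibd * u) ^ (1 / lam) := by
      rw [Real.mul_rpow (by positivity) (by positivity),
        ← Real.rpow_mul (by norm_num : (0:ℝ) ≤ 2)]
      congr 1
      field_simp
    rw [h2, h3] at h1
    exact h1
  exact le_trans hregx hD
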